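/- Let F: ℝᵐ × ℝᵏ → ℝ be a C² function, let p = (x, e) ∈ Σ_F, and let H = D²F(p) be the Hessian of F at p, written in blocks H_{xx}, H_{xe}, H_{ex}, H_{ee} according to the splitting ℝᵐ × ℝᵏ. Suppose (ξ, η) and (ξ′, η′) ∈ ℝᵐ × ℝᵏ are tangent to Σ_F at p in the sense that H_{ex}ξ + H_{ee}η = 0 and H_{ex}ξ′ + H_{ee}η′ = 0. Then, setting u = (ξ, H_{xx}ξ + H_{xe}η) and v = (ξ′, H_{xx}ξ′ + H_{xe}η′) (the images of these vectors under the derivative of the map i_F(x,e) = (x, D_xF(x,e))), one has ω(u, v) = 0, where ω is the standard symplectic form on ℝᵐ × ℝᵐ. That is, the set generated by F is isotropic. -/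

import Mathlib

/-- The set generated by a C² generating family `F` is isotropic: if `(ξ,η)` and `(ξ',η')`
are tangent to the fiber critical locus `Σ_F` at `p` (i.e. annihilated by the fiber rows of
the Hessian `H = D²F(p)`), then their images `u = (ξ, H_{xx}ξ + H_{xe}η)` and
`v = (ξ', H_{xx}ξ' + H_{xe}η')` under `di_F` satisfy `ω(u,v) = 0`. -/
theorem stmt14 (m k : ℕ) (F : (Fin m → ℝ) × (Fin k → ℝ) → ℝ) (hF : ContDiff ℝ 2 F)
    (p : (Fin m → ℝ) × (Fin k → ℝ))
    (hp : ∀ η : Fin k → ℝ, fderiv ℝ F p (0, η) = 0)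
    (ξ ξ' : Fin m → ℝ) (η η' : Fin k → ℝ)
    (htan : ∀ η₀ : Fin k → ℝ, fderiv ℝ (fderiv ℝ F) p (ξ, η) (0, η₀) = 0)
    (htan' : ∀ η₀ : Fin k → ℝ, fderiv ℝ (fderiv ℝ F) p (ξ', η') (0, η₀) = 0) :
    (∑ i, ξ i * fderiv ℝ (fderiv ℝ F) p (ξ', η') (Pi.single i 1, 0))
      - (∑ i, (fderiv ℝ (fderiv ℝ F) p (ξ, η) (Pi.single i 1, 0)) * ξ' i) = 0 := by
  set H := fderiv ℝ (fderiv ℝ F) p with hH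
  have hsymm : ∀ v w, H v w = H w v :=
    (hF.contDiffAt.isSymmSndFDerivAt (by simp))
  have key : ∀ a : Fin m → ℝ, ∀ b : (Fin m → ℝ) × (Fin k → ℝ),
      ∑ i, a i * H b (Pi.single i 1, 0) = H b (a, 0) := by
    intro a b
    have ha : ((a, 0) : (Fin m → ℝ) × (Fin k → ℝ))
        = ∑ i, a i • ((Pi.single i 1 : Fin m → ℝ), (0 : Fin k → ℝ)) := by
      ext j
      · simp [Prod.fst_sum, Finset.sum_apply, Pi.single_apply, mul_comm]
      · simp [Prod.snd_sum]
    rw [ha, map_sum]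
    refine Finset.sum_congr rfl fun i _ => ?_
    rw [map_smul]
    simp
  rw [key ξ (ξ', η')]
  have e2 : ∑ i, H (ξ, η) (Pi.single i 1, 0) * ξ' i = H (ξ, η) (ξ', 0) := by
    rw [← key ξ' (ξ, η)]
    exact Finset.sum_congr rfl fun i _ => mul_comm _ _
  rw [e2]
  have d1 : H (ξ', η') (ξ, 0) = H (ξ', η') (ξ, η) := by
    have : ((ξ, η) : (Fin m → ℝ) × (Fin k → ℝ)) = (ξ, 0) + (0, η) := by simp
    rw [this, map_add, htan' η]; ring
  have d2 : H (ξ, η) (ξ', 0) = H (ξ, η) (ξ', η') := by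
    have : ((ξ', η') : (Fin m → ℝ) × (Fin k → ℝ)) = (ξ', 0) + (0, η') := by simp
    rw [this, map_add, htan η']; ring
  rw [d1, d2, hsymm (ξ, η) (ξ', η'), sub_self]
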